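/- The infinite series Σ_{k=1}^{∞} (∏_{i=1}^{k}(p_i^2 - 1)) / ((p_k^2 - 1) · ∏_{i=1}^{k} p_i^2), where p_i is the i-th prime, converges to 1 - 6/π². -/

import Mathlib

open Filter Finset Topology

/-- `p i` is the `i`-th prime (1-indexed: `p 1 = 2`). -/
noncomputable def p (i : ℕ) : ℕ := Nat.nth Nat.Prime (i - 1)

noncomputable def fzeta : ℕ →*₀ ℝ where
  toFun n := ((n : ℝ) ^ 2)⁻¹
  map_zero' := by simp
  map_one' := by simp
  map_mul' m n := by push_cast; rw [mul_pow, mul_inv]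

lemma fzeta_summable : Summable (‖fzeta ·‖) := by
  have : Summable (fun n : ℕ => 1 / (n : ℝ) ^ 2) :=
    Real.summable_one_div_nat_pow.mpr one_lt_two
  refine this.congr fun n => ?_
  simp [fzeta, abs_of_nonneg, one_div]

lemma tsum_fzeta : ∑' n, fzeta n = Real.pi ^ 2 / 6 := by
  have := hasSum_zeta_two.tsum_eq
  rw [← this]
  refine tsum_congr fun n => ?_
  simp [fzeta, one_div]

lemma euler2 : Tendsto (fun n : ℕ => ∏ q ∈ Nat.primesBelow n, (1 - ((q : ℝ) ^ 2)⁻¹))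
    atTop (𝓝 (6 / Real.pi ^ 2)) := by
  have h := EulerProduct.eulerProduct_completely_multiplicative fzeta_summable
  rw [tsum_fzeta] at h
  have h2 := h.inv₀ (by positivity : (Real.pi ^ 2 / 6 : ℝ) ≠ 0)
  have : (Real.pi ^ 2 / 6 : ℝ)⁻¹ = 6 / Real.pi ^ 2 := by field_simp
  rw [this] at h2
  refine h2.congr fun n => ?_
  rw [← Finset.prod_inv_distrib]
  exact Finset.prod_congr rfl fun q _ => by rw [inv_inv]; rfl

lemma primesBelow_nth (k : ℕ) :
    Nat.primesBelow (Nat.nth Nat.Prime k) = (range k).image (Nat.nth Nat.Prime) := by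
  ext q
  simp only [Nat.mem_primesBelow, mem_image, mem_range]
  constructor
  · rintro ⟨hlt, hq⟩
    refine ⟨Nat.count Nat.Prime q, ?_, Nat.nth_count hq⟩
    have := Nat.nth_count hq
    rw [← this] at hlt
    exact (Nat.nth_lt_nth Nat.infinite_setOf_prime).mp hlt
  · rintro ⟨j, hj, rfl⟩
    exact ⟨(Nat.nth_lt_nth Nat.infinite_setOf_prime).mpr hj, Nat.prime_nth_prime j⟩

lemma tendsto_prod_nth : Tendsto
    (fun k : ℕ => ∏ j ∈ range k, (1 - ((Nat.nth Nat.Prime j : ℝ) ^ 2)⁻¹))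
    atTop (𝓝 (6 / Real.pi ^ 2)) := by
  have hmono : StrictMono (Nat.nth Nat.Prime) :=
    Nat.nth_strictMono Nat.infinite_setOf_prime
  have := euler2.comp hmono.tendsto_atTop
  refine this.congr fun k => ?_
  simp only [Function.comp_apply]
  rw [primesBelow_nth, Finset.prod_image]
  exact fun a _ b _ h => hmono.injective h

lemma prod_Icc_eq (n : ℕ) :
    ∏ i ∈ Icc 1 n, (1 - ((p i : ℝ) ^ 2)⁻¹)
      = ∏ j ∈ range n, (1 - ((Nat.nth Nat.Prime j : ℝ) ^ 2)⁻¹) := by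
  induction n with
  | zero => simp
  | succ n ih =>
      rw [Finset.prod_Icc_succ_top (Nat.le_add_left 1 n), prod_range_succ, ih]
      simp [p]

lemma p_prime (i : ℕ) : (p i).Prime := Nat.prime_nth_prime _

lemma hp2 (i : ℕ) : (2 : ℝ) ≤ (p i : ℝ) := by exact_mod_cast (p_prime i).two_le

lemma hpsq_ne (i : ℕ) : ((p i : ℝ) ^ 2) ≠ 0 := by
  have := hp2 i; positivity

lemma hpsq1_ne (i : ℕ) : ((p i : ℝ) ^ 2 - 1) ≠ 0 := by
  have h := hp2 i
  nlinarith

lemma prodsq_ne (n : ℕ) : (∏ i ∈ Icc 1 n, (p i : ℝ) ^ 2) ≠ 0 :=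
  Finset.prod_ne_zero_iff.mpr fun i _ => hpsq_ne i

lemma A_eq (n : ℕ) : ∏ i ∈ Icc 1 n, (1 - ((p i : ℝ) ^ 2)⁻¹)
    = (∏ i ∈ Icc 1 n, ((p i : ℝ) ^ 2 - 1)) / (∏ i ∈ Icc 1 n, (p i : ℝ) ^ 2) := by
  rw [← Finset.prod_div_distrib]
  refine Finset.prod_congr rfl fun i _ => ?_
  have := hpsq_ne i
  field_simp
  rw [sub_div, div_self this]

lemma partial_sum (n : ℕ) :
    ∑ k ∈ Finset.Icc 1 n,
        (∏ i ∈ Finset.Icc 1 k, ((p i : ℝ) ^ 2 - 1)) /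
          (((p k : ℝ) ^ 2 - 1) * ∏ i ∈ Finset.Icc 1 k, (p i : ℝ) ^ 2)
      = 1 - ∏ i ∈ Icc 1 n, (1 - ((p i : ℝ) ^ 2)⁻¹) := by
  induction n with
  | zero => simp
  | succ n ih =>
      rw [Finset.sum_Icc_succ_top (Nat.le_add_left 1 n), ih,
        Finset.prod_Icc_succ_top (Nat.le_add_left 1 n) (fun i => (1 - ((p i : ℝ) ^ 2)⁻¹)),
        Finset.prod_Icc_succ_top (Nat.le_add_left 1 n) (fun i => ((p i : ℝ) ^ 2 - 1)),
        Finset.prod_Icc_succ_top (Nat.le_add_left 1 n) (fun i => ((p i : ℝ) ^ 2)),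
        A_eq]
      have h1 := hpsq_ne (n + 1)
      have h2 := hpsq1_ne (n + 1)
      have h3 := prodsq_ne n
      field_simp
      ring

theorem stmt_5 :
    Tendsto (fun n : ℕ => ∑ k ∈ Finset.Icc 1 n,
        (∏ i ∈ Finset.Icc 1 k, ((p i : ℝ) ^ 2 - 1)) /
          (((p k : ℝ) ^ 2 - 1) * ∏ i ∈ Finset.Icc 1 k, (p i : ℝ) ^ 2))
      atTop (𝓝 (1 - 6 / Real.pi ^ 2)) := by
  have h : Tendsto (fun n : ℕ => 1 - ∏ i ∈ Icc 1 n, (1 - ((p i : ℝ) ^ 2)⁻¹))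
      atTop (𝓝 (1 - 6 / Real.pi ^ 2)) := by
    have := tendsto_prod_nth
    have h2 : Tendsto (fun n : ℕ => ∏ i ∈ Icc 1 n, (1 - ((p i : ℝ) ^ 2)⁻¹))
        atTop (𝓝 (6 / Real.pi ^ 2)) := by
      refine this.congr fun n => (prod_Icc_eq n).symm
    exact (tendsto_const_nhds.sub h2)
  refine h.congr fun n => (partial_sum n).symm
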